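/- Let G be a cubic graph and let P* be a valid factor of G minimizing the number of components, and among such, minimizing the number of odd cycle components. Then every odd cycle of P* is chordless (induced) in G. -/

import Mathlib

open SimpleGraph

/-- A cubic graph: every vertex has degree 3. -/
def IsCubic {V : Type*} [Fintype V] (G : SimpleGraph V) : Prop :=
  ∀ v : V, Nat.card (G.neighborSet v) = 3

/-- A circular nowhere-zero `r`-flow: an orientation `dir` of `G` together with
a flow value `f` on each directed edge, with values in `[1, r-1]` and flow
conservation at every vertex. -/
structure CNZF {V : Type*} [Fintype V] (G : SimpleGraph V) (r : ℝ) where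
  dir : V → V → Bool
  f : V → V → ℝ
  orients : ∀ u v, G.Adj u v ↔ (dir u v = true ∨ dir v u = true)
  asymm : ∀ u v, dir u v = true → dir v u = false
  lb : ∀ u v, dir u v = true → 1 ≤ f u v
  ub : ∀ u v, dir u v = true → f u v ≤ r - 1
  conserv : ∀ v : V, (∑ u : V, if dir v u = true then f v u else 0)
      = ∑ u : V, if dir u v = true then f u v else 0

/-- Out-degree of a vertex in an orientation. -/
noncomputable def outDeg {V : Type*} (dir : V → V → Bool) (v : V) : ℕ :=
  Nat.card {u | dir v u = true}

/-- Every connected component of the subgraph induced by `S` is a tree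
on at most `m` vertices. -/
def MonoOK {V : Type*} (G : SimpleGraph V) (m : ℕ) (S : Set V) : Prop :=
  (G.induce S).IsAcyclic ∧
    ∀ c : (G.induce S).ConnectedComponent, Nat.card c.supp ≤ m

/-- A `k`-weak bisection, given by its first part `S`. -/
def IsWeakBisection {V : Type*} [Fintype V] (G : SimpleGraph V) (k : ℕ) (S : Set V) : Prop :=
  Nat.card S = Nat.card (Sᶜ : Set V) ∧ MonoOK G (k-2) S ∧ MonoOK G (k-2) (Sᶜ : Set V)

/-- Every monochromatic component of the 2-coloring `c` has at most `m` vertices. -/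
def MonoAtMost {V : Type*} (G : SimpleGraph V) (c : V → Bool) (m : ℕ) : Prop :=
  ∀ b : Bool, ∀ comp : (G.induce {v | c v = b}).ConnectedComponent,
    Nat.card comp.supp ≤ m

/-- Edges of `L_k` (on vertex labels `0, …, 5+2k`): `L_0` is `K_{3,3}` minus an
edge (parts `{0,1,4}` and `{2,3,5}`, edge `45` removed, degree-2 vertices `4,5`);
at step `j` the two new adjacent vertices `4+2j, 5+2j` are attached to the
previous degree-2 vertices `2+2j, 3+2j`. The degree-2 vertices of `L_k` are
`4+2k` and `5+2k`. -/
def LEdge (k : ℕ) (a b : ℕ) : Prop :=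
  (a, b) ∈ ({(0,2),(0,3),(0,5),(1,2),(1,3),(1,5),(4,2),(4,3)} : Set (ℕ × ℕ)) ∨
  ∃ j, 1 ≤ j ∧ j ≤ k ∧
    ((a, b) = (4+2*j, 5+2*j) ∨ (a, b) = (2+2*j, 4+2*j) ∨ (a, b) = (3+2*j, 5+2*j))

/-- The graph `L_k`. -/
def Lgraph (k : ℕ) : SimpleGraph (Fin (6+2*k)) :=
  SimpleGraph.fromRel (fun a b => LEdge k a.val b.val)

/-- Edges of `T_k`: one copy of `L'_k` (the copy of `L_k` on `0..5+2k` with apex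
`6+2k`), two copies of `L'_0` (on `7+2k..12+2k` with apex `13+2k`, and on
`14+2k..19+2k` with apex `20+2k`), and a central vertex `21+2k` adjacent to the
three apexes. -/
def TEdge (k : ℕ) (a b : ℕ) : Prop :=
  LEdge k a b
  ∨ (a = 6+2*k ∧ (b = 4+2*k ∨ b = 5+2*k))
  ∨ (∃ a' b', LEdge 0 a' b' ∧ a = 7+2*k+a' ∧ b = 7+2*k+b')
  ∨ (a = 13+2*k ∧ (b = 11+2*k ∨ b = 12+2*k))
  ∨ (∃ a' b', LEdge 0 a' b' ∧ a = 14+2*k+a' ∧ b = 14+2*k+b')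
  ∨ (a = 20+2*k ∧ (b = 18+2*k ∨ b = 19+2*k))
  ∨ (a = 21+2*k ∧ (b = 6+2*k ∨ b = 13+2*k ∨ b = 20+2*k))

/-- The cubic graph `T_k`. -/
def Tgraph (k : ℕ) : SimpleGraph (Fin (22+2*k)) :=
  SimpleGraph.fromRel (fun a b => TEdge k a.val b.val)

/-- A valid factor of `G`: a spanning subgraph all of whose components are paths
or cycles (equivalently, all degrees are 1 or 2), such that the two endpoints
(degree-1 vertices) of every odd component are non-adjacent in `G`; in particular
no component is an isolated vertex. -/
def IsValidFactor {V : Type*} (G H : SimpleGraph V) : Prop :=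
  H ≤ G ∧
  (∀ v : V, 1 ≤ Nat.card (H.neighborSet v) ∧ Nat.card (H.neighborSet v) ≤ 2) ∧
  ∀ c : H.ConnectedComponent, Odd (Nat.card c.supp) →
    ∀ u v : V, u ∈ c.supp → v ∈ c.supp → u ≠ v →
      Nat.card (H.neighborSet u) = 1 → Nat.card (H.neighborSet v) = 1 → ¬ G.Adj u v

/-- A component of `H` is a cycle iff all its vertices have degree 2 in `H`. -/
def IsCycleComp {V : Type*} (H : SimpleGraph V) (c : H.ConnectedComponent) : Prop :=
  ∀ v ∈ c.supp, Nat.card (H.neighborSet v) = 2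

/-- An odd cycle component. -/
def OddCycleComp {V : Type*} (H : SimpleGraph V) (c : H.ConnectedComponent) : Prop :=
  Odd (Nat.card c.supp) ∧ IsCycleComp H c

/-- An odd path component (a component with an odd number of vertices containing
a degree-1 vertex). -/
def OddPathComp {V : Type*} (H : SimpleGraph V) (c : H.ConnectedComponent) : Prop :=
  Odd (Nat.card c.supp) ∧ ∃ v ∈ c.supp, Nat.card (H.neighborSet v) = 1

noncomputable def numComponents {V : Type*} (H : SimpleGraph V) : ℕ := Nat.card H.ConnectedComponent

noncomputable def numOddCycles {V : Type*} (H : SimpleGraph V) : ℕ :=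
  Nat.card {c : H.ConnectedComponent // OddCycleComp H c}

/-- `H` is a valid factor of `G` with the minimum number of components. -/
def MinimizesComponents {V : Type*} (G H : SimpleGraph V) : Prop :=
  IsValidFactor G H ∧ ∀ H' : SimpleGraph V, IsValidFactor G H' →
    numComponents H ≤ numComponents H'

/-- `H` is a valid factor of `G` minimizing the number of components and,
subject to that, the number of odd cycles. -/
def IsMinValidFactor {V : Type*} (G H : SimpleGraph V) : Prop :=
  MinimizesComponents G H ∧
  ∀ H' : SimpleGraph V, IsValidFactor G H' →
    numComponents H' = numComponents H → numOddCycles H ≤ numOddCycles H'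

/-- An external vertex of a factor: an endpoint of a path component, or a vertex
of an odd cycle component. -/
def ExternalVtx {V : Type*} (H : SimpleGraph V) (v : V) : Prop :=
  Nat.card (H.neighborSet v) = 1 ∨ OddCycleComp H (H.connectedComponentMk v)


section
variable {V : Type*}

lemma reach_mono' {H H' : SimpleGraph V} (h : ∀ a b, H.Adj a b → H'.Reachable a b)
    {x y : V} (hr : H.Reachable x y) : H'.Reachable x y := by
  obtain ⟨w⟩ := hr
  induction w with
  | nil => exact Reachable.refl _
  | cons ha p ih => exact (h _ _ ha).trans ih



lemma reach_mono'X {H H' : SimpleGraph V} (h : ∀ a b, H.Adj a b → H'.Reachable a b)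
    {x y : V} (hr : H.Reachable x y) : H'.Reachable x y := by
  obtain ⟨w⟩ := hr
  induction w with
  | nil => exact Reachable.refl _
  | cons ha p ih => exact (h _ _ ha).trans ih

lemma reach_closed' {H' : SimpleGraph V} {S : Set V}
    (hcl : ∀ a b, H'.Adj a b → a ∈ S → b ∈ S) {u x : V} (hu : u ∈ S)
    (h : H'.Reachable u x) : x ∈ S := by
  obtain ⟨w⟩ := h
  induction w with
  | nil => exact hu
  | cons ha p ih => exact ih (hcl _ _ ha hu)

lemma two_nbrs {H : SimpleGraph V} {x a : V} (h2 : Nat.card (H.neighborSet x) = 2)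
    (ha : H.Adj x a) : ∃ b, a ≠ b ∧ H.neighborSet x = {a, b} := by
  rw [Nat.card_coe_set_eq, Set.ncard_eq_two] at h2
  obtain ⟨c, d, hcd, hset⟩ := h2
  have : a ∈ ({c, d} : Set V) := by rw [← hset]; exact ha
  rcases this with rfl | rfl
  · exact ⟨d, hcd, hset⟩
  · exact ⟨c, hcd.symm, by rw [hset, Set.pair_comm]⟩

lemma getVert_inj {G : SimpleGraph V} {u v : V} {w : G.Walk u v} (hw : w.IsPath) :
    ∀ i j, i ≤ w.length → j ≤ w.length → w.getVert i = w.getVert j → i = j := by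
  induction w with
  | nil => intro i j hi hj _; simp at hi hj; omega
  | @cons a b c ha p ih =>
    intro i j hi hj hij
    rw [SimpleGraph.Walk.cons_isPath_iff] at hw
    match i, j with
    | 0, 0 => rfl
    | 0, k+1 =>
      exfalso
      apply hw.2
      rw [SimpleGraph.Walk.mem_support_iff_exists_getVert]
      refine ⟨k, ?_, ?_⟩
      · simpa [SimpleGraph.Walk.getVert_cons_succ] using hij.symm
      · simpa using hj
    | k+1, 0 =>
      exfalso
      apply hw.2
      rw [SimpleGraph.Walk.mem_support_iff_exists_getVert]
      refine ⟨k, ?_, ?_⟩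
      · simpa [SimpleGraph.Walk.getVert_cons_succ] using hij
      · simpa using hi
    | k+1, l+1 =>
      have := ih hw.1 k l (by simpa using hi) (by simpa using hj)
        (by simpa [SimpleGraph.Walk.getVert_cons_succ] using hij)
      omega


lemma reach_seg {G : SimpleGraph V} {u v : V} (w : G.Walk u v) (D : Set (Sym2 V))
    (i : ℕ) :
    ∀ j, i ≤ j → j ≤ w.length →
    (∀ k, i ≤ k → k < j → s(w.getVert k, w.getVert (k+1)) ∉ D) →
    (G.deleteEdges D).Reachable (w.getVert i) (w.getVert j) := by
  intro j
  induction j with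
  | zero =>
    intro h1 _ _
    have : i = 0 := by omega
    rw [this]
  | succ n ihn =>
    intro h1 h2 hD
    rcases Nat.lt_or_ge i (n+1) with h | h
    · have hn : i ≤ n := by omega
      refine (ihn hn (by omega) (fun k hk1 hk2 => hD k hk1 (by omega))).trans
        (Adj.reachable ?_)
      rw [SimpleGraph.deleteEdges_adj]
      exact ⟨w.adj_getVert_succ (by omega), hD n hn (by omega)⟩
    · have : i = n + 1 := by omega
      rw [this]

lemma card_four {a b x y : V} (h1 : a ≠ b) (h2 : a ≠ x) (h3 : a ≠ y) (h4 : b ≠ x)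
    (h5 : b ≠ y) (h6 : x ≠ y) : Nat.card ({a, b, x, y} : Set V) = 4 := by
  rw [Nat.card_coe_set_eq,
    Set.ncard_insert_of_notMem (by simp [h1, h2, h3]),
    Set.ncard_insert_of_notMem (by simp [h4, h5]), Set.ncard_pair h6]

lemma card_six {a b x y z t : V} (h1 : a ≠ b) (h2 : a ≠ x) (h3 : a ≠ y) (h4 : a ≠ z)
    (h5 : a ≠ t) (h6 : b ≠ x) (h7 : b ≠ y) (h8 : b ≠ z) (h9 : b ≠ t) (h10 : x ≠ y)
    (h11 : x ≠ z) (h12 : x ≠ t) (h13 : y ≠ z) (h14 : y ≠ t) (h15 : z ≠ t) :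
    Nat.card ({a, b, x, y, z, t} : Set V) = 6 := by
  rw [Nat.card_coe_set_eq,
    Set.ncard_insert_of_notMem (by simp [h1, h2, h3, h4, h5]),
    Set.ncard_insert_of_notMem (by simp [h6, h7, h8, h9]),
    Set.ncard_insert_of_notMem (by simp [h10, h11, h12]),
    Set.ncard_insert_of_notMem (by simp [h13, h14]), Set.ncard_pair h15]

lemma cubic_four [Fintype V] {G : SimpleGraph V} (hG : IsCubic G) {x a b s t : V}
    (ha : G.Adj x a) (hb : G.Adj x b) (hs : G.Adj x s) (ht : G.Adj x t)
    (h1 : a ≠ b) (h2 : a ≠ s) (h3 : a ≠ t) (h4 : b ≠ s) (h5 : b ≠ t) (h6 : s ≠ t) :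
    False := by
  have hsub : ({a, b, s, t} : Set V) ⊆ G.neighborSet x := by
    intro z hz
    simp only [Set.mem_insert_iff, Set.mem_singleton_iff] at hz
    rcases hz with rfl | rfl | rfl | rfl
    exacts [ha, hb, hs, ht]
  have hle := Set.ncard_le_ncard hsub (G.neighborSet x).toFinite
  have h4c : ({a, b, s, t} : Set V).ncard = 4 := by
    rw [← Nat.card_coe_set_eq]
    exact card_four h1 h2 h3 h4 h5 h6
  have h3c := hG x
  rw [Nat.card_coe_set_eq] at h3c
  omega

-- handshake
lemma handshake_reach [Fintype V] (H' : SimpleGraph V) (u : V) :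
    Even (Nat.card {x : V | H'.Reachable u x ∧ Odd (Nat.card (H'.neighborSet x))}) := by
  classical
  let H2 : SimpleGraph V :=
    { Adj := fun a b => H'.Adj a b ∧ H'.Reachable u a ∧ H'.Reachable u b
      symm := ⟨fun a b ⟨h1, h2, h3⟩ => ⟨h1.symm, h3, h2⟩⟩
      loopless := ⟨fun a ⟨h1, _⟩ => H'.loopless.irrefl a h1⟩ }
  have hN : ∀ x, H2.neighborSet x = if H'.Reachable u x then H'.neighborSet x else ∅ := by
    intro x
    ext y
    by_cases hx : H'.Reachable u x
    · simp only [if_pos hx, mem_neighborSet]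
      constructor
      · rintro ⟨h1, _, _⟩; exact h1
      · intro h; exact ⟨h, hx, hx.trans h.reachable⟩
    · simp only [if_neg hx, Set.mem_empty_iff_false, iff_false, mem_neighborSet]
      rintro ⟨h1, h2, _⟩; exact hx h2
  have := H2.even_card_odd_degree_vertices
  have hdeg : ∀ x, H2.degree x = Nat.card (H2.neighborSet x) := by
    intro x; rw [← card_neighborSet_eq_degree, Nat.card_eq_fintype_card]
  have hset : {x : V | H'.Reachable u x ∧ Odd (Nat.card (H'.neighborSet x))}
      = {x : V | Odd (H2.degree x)} := by
    ext x
    simp only [Set.mem_setOf_eq, hdeg, hN]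
    by_cases hx : H'.Reachable u x
    · simp [hx]
    · simp [hx, Nat.odd_iff]
  rw [hset]
  have : Nat.card {x : V | Odd (H2.degree x)}
      = (Finset.univ.filter fun x => Odd (H2.degree x)).card := by
    rw [Nat.card_eq_fintype_card]
    exact Fintype.card_subtype _
  rw [this]
  exact this ▸ H2.even_card_odd_degree_vertices

lemma master [Fintype V] {G H : SimpleGraph V}
    (hmin : IsMinValidFactor G H) {c : H.ConnectedComponent}
    (hc : OddCycleComp H c) (H' : SimpleGraph V)
    (hle : H' ≤ G)
    (hadd : ∀ x y, H'.Adj x y → H.Adj x y ∨ (x ∈ c.supp ∧ y ∈ c.supp))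
    (hdel : ∀ x y, H.Adj x y → H'.Adj x y ∨ (x ∈ c.supp ∧ y ∈ c.supp))
    (hreach : ∀ x ∈ c.supp, ∀ y ∈ c.supp, H'.Reachable x y)
    (e1 e2 : V) (he1 : e1 ∈ c.supp) (he2 : e2 ∈ c.supp) (hne : e1 ≠ e2)
    (hdeg1 : Nat.card (H'.neighborSet e1) = 1)
    (hdeg2 : Nat.card (H'.neighborSet e2) = 1)
    (hdeg : ∀ x ∈ c.supp, x ≠ e1 → x ≠ e2 → Nat.card (H'.neighborSet x) = 2)
    (hnadj : ¬ G.Adj e1 e2) : False := by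
  classical
  have hreachS : ∀ x y : V, x ∈ c.supp → y ∈ c.supp → H.Reachable x y := by
    intro x y hx hy
    rw [ConnectedComponent.mem_supp_iff] at hx hy
    have := hx.trans hy.symm
    exact ConnectedComponent.eq.mp this
  -- reachability relations coincide
  have hiff : ∀ x y, H.Reachable x y ↔ H'.Reachable x y := by
    intro x y
    constructor
    · refine fun hr => reach_mono' (fun a b hab => ?_) hr
      rcases hdel a b hab with h | ⟨ha, hb⟩
      · exact h.reachable
      · exact hreach a ha b hb
    · refine fun hr => reach_mono' (fun a b hab => ?_) hr
      rcases hadd a b hab with h | ⟨ha, hb⟩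
      · exact h.reachable
      · exact hreachS a b ha hb
  -- component equivalence
  let f : H.ConnectedComponent → H'.ConnectedComponent :=
    ConnectedComponent.lift (H'.connectedComponentMk)
      (fun v w p _ => ConnectedComponent.sound ((hiff v w).mp ⟨p⟩))
  let g : H'.ConnectedComponent → H.ConnectedComponent :=
    ConnectedComponent.lift (H.connectedComponentMk)
      (fun v w p _ => ConnectedComponent.sound ((hiff v w).mpr ⟨p⟩))
  have hgf : ∀ d, g (f d) = d := by
    refine ConnectedComponent.ind (fun v => ?_)
    rfl
  have hfg : ∀ d, f (g d) = d := by
    refine ConnectedComponent.ind (fun v => ?_)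
    rfl
  let φ : H.ConnectedComponent ≃ H'.ConnectedComponent :=
    ⟨f, g, hgf, hfg⟩
  have hsupp : ∀ d : H.ConnectedComponent, (φ d).supp = d.supp := by
    refine ConnectedComponent.ind (fun v => ?_)
    ext y
    simp only [ConnectedComponent.mem_supp_iff]
    show H'.connectedComponentMk y = H'.connectedComponentMk v ↔ _
    rw [ConnectedComponent.eq, ConnectedComponent.eq, ← hiff]
  have hHval := hmin.1.1
  have hout : ∀ x, x ∉ c.supp → H'.neighborSet x = H.neighborSet x := by
    intro x hx
    ext y
    simp only [mem_neighborSet]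
    constructor
    · intro h
      rcases hadd x y h with h' | ⟨h1, _⟩
      · exact h'
      · exact absurd h1 hx
    · intro h
      rcases hdel x y h with h' | ⟨h1, _⟩
      · exact h'
      · exact absurd h1 hx
  -- suppφ : supp of φ.symm d' equals supp d'
  have hsupp' : ∀ d' : H'.ConnectedComponent, (φ.symm d').supp = d'.supp := by
    intro d'
    have h := hsupp (φ.symm d')
    rw [Equiv.apply_symm_apply] at h
    exact h.symm
  -- degrees of H' everywhere
  have hdeg' : ∀ x : V, 1 ≤ Nat.card (H'.neighborSet x) ∧ Nat.card (H'.neighborSet x) ≤ 2 := by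
    intro x
    by_cases hx : x ∈ c.supp
    · by_cases h1 : x = e1
      · subst h1; rw [hdeg1]; omega
      · by_cases h2 : x = e2
        · subst h2; rw [hdeg2]; omega
        · rw [hdeg x hx h1 h2]; omega
    · rw [hout x hx]; exact hHval.2.1 x
  -- supp of components of H' disjoint from c.supp unless equal to it
  have hdisj : ∀ d' : H'.ConnectedComponent, φ.symm d' ≠ c →
      ∀ z ∈ d'.supp, z ∉ c.supp := by
    intro d' hd z hz hzc
    apply hd
    rw [← hsupp' d'] at hz
    rw [ConnectedComponent.mem_supp_iff] at hz hzc
    rw [← hz, ← hzc]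
  -- validity of H'
  have hvalid : IsValidFactor G H' := by
    refine ⟨hle, hdeg', ?_⟩
    intro d' hodd x y hx hy hxy hdx hdy
    by_cases hd : φ.symm d' = c
    · -- the modified component
      have hsx : x ∈ c.supp := by rw [← hd, hsupp' d']; exact hx
      have hsy : y ∈ c.supp := by rw [← hd, hsupp' d']; exact hy
      have hx12 : x = e1 ∨ x = e2 := by
        by_contra hcon
        push_neg at hcon
        rw [hdeg x hsx hcon.1 hcon.2] at hdx; omega
      have hy12 : y = e1 ∨ y = e2 := by
        by_contra hcon
        push_neg at hcon
        rw [hdeg y hsy hcon.1 hcon.2] at hdy; omega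
      rcases hx12 with rfl | rfl <;> rcases hy12 with rfl | rfl
      · exact absurd rfl hxy
      · exact hnadj
      · exact fun h => hnadj h.symm
      · exact absurd rfl hxy
    · -- untouched components
      have hzout := hdisj d' hd
      have hsupp_eq : (φ.symm d').supp = d'.supp := hsupp' d'
      have hodd2 : Odd (Nat.card (φ.symm d').supp) := by rw [hsupp_eq]; exact hodd
      refine hHval.2.2 (φ.symm d') hodd2 x y ?_ ?_ hxy ?_ ?_
      · rw [hsupp_eq]; exact hx
      · rw [hsupp_eq]; exact hy
      · rw [← hout x (hzout x hx)]; exact hdx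
      · rw [← hout y (hzout y hy)]; exact hdy
  -- same number of components
  have hcomp : numComponents H' = numComponents H := by
    unfold numComponents
    exact Nat.card_congr φ.symm
  -- c is an odd cycle of H but its H'-counterpart is not
  have hocc_c : OddCycleComp H c := hc
  -- injection from odd cycles of H' into odd cycles of H minus c
  have hinj : ∀ d' : H'.ConnectedComponent, OddCycleComp H' d' →
      OddCycleComp H (φ.symm d') ∧ φ.symm d' ≠ c := by
    intro d' hocc
    have hd : φ.symm d' ≠ c := by
      intro hd
      have he1' : e1 ∈ d'.supp := by rw [← hsupp' d', hd]; exact he1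
      have := hocc.2 e1 he1'
      rw [hdeg1] at this; omega
    refine ⟨⟨?_, ?_⟩, hd⟩
    · rw [hsupp' d']; exact hocc.1
    · intro z hz
      rw [hsupp' d'] at hz
      rw [← hout z (hdisj d' hd z hz)]
      exact hocc.2 z hz
  have hlt : numOddCycles H' < numOddCycles H := by
    unfold numOddCycles
    have : Nat.card {d' : H'.ConnectedComponent // OddCycleComp H' d'}
        ≤ Nat.card {d : H.ConnectedComponent // OddCycleComp H d ∧ d ≠ c} := by
      refine Nat.card_le_card_of_injective
        (fun d' => ⟨φ.symm d'.1, hinj d'.1 d'.2⟩) ?_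
      intro a b hab
      have := congrArg Subtype.val hab
      simp only at this
      exact Subtype.ext (φ.symm.injective this)
    refine lt_of_le_of_lt this ?_
    have h2 : Nat.card {d : H.ConnectedComponent // OddCycleComp H d ∧ d ≠ c}
        < Nat.card {d : H.ConnectedComponent // OddCycleComp H d} := by
      have hfin : Finite H.ConnectedComponent := Quot.finite _
      rw [Nat.card_eq_fintype_card, Nat.card_eq_fintype_card]
      refine Fintype.card_lt_of_injective_of_notMem
        (fun d => ⟨d.1, d.2.1⟩) ?_ (b := ⟨c, hocc_c⟩) ?_
      · intro a b hab
        have h2 := congrArg Subtype.val hab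
        simp only at h2
        exact Subtype.ext h2
      · rintro ⟨⟨d, hd⟩, heq⟩
        have h2 := congrArg Subtype.val heq
        simp only at h2
        exact hd.2 h2
    exact h2
  have := hmin.2 H' hvalid hcomp
  omega

lemma pair_card {a b : V} (h : a ≠ b) : Nat.card ({a, b} : Set V) = 2 := by
  rw [Nat.card_coe_set_eq]; exact Set.ncard_pair h

lemma single_card (a : V) : Nat.card ({a} : Set V) = 1 := by
  rw [Nat.card_coe_set_eq]; exact Set.ncard_singleton a

lemma swapA [Fintype V] {G H : SimpleGraph V}
    (hmin : IsMinValidFactor G H) {c : H.ConnectedComponent} (hc : OddCycleComp H c)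
    {u v p q q' p' p₂ q₂ : V}
    (hu : u ∈ c.supp) (hv : v ∈ c.supp)
    (hGuv : G.Adj u v) (hHuv : ¬ H.Adj u v)
    (hNu : H.neighborSet u = {p, q'}) (hpq' : p ≠ q')
    (hNv : H.neighborSet v = {p', q}) (hp'q : p' ≠ q)
    (hNp : H.neighborSet p = {u, p₂}) (hup₂ : u ≠ p₂)
    (hNq : H.neighborSet q = {v, q₂}) (hvq₂ : v ≠ q₂)
    (hpq : p ≠ q) (hpv : p ≠ v) (hqu : q ≠ u) (hp'u : p' ≠ u) (hq'v : q' ≠ v)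
    (hreach : (H.deleteEdges {s(u,p), s(v,q)}).Reachable p v)
    (hnadj : ¬ G.Adj p q) : False := by
  classical
  have huv : u ≠ v := hGuv.ne
  have hadj_u : ∀ y, H.Adj u y ↔ (y = p ∨ y = q') := by
    intro y; rw [← mem_neighborSet, hNu]; simp
  have hadj_v : ∀ y, H.Adj v y ↔ (y = p' ∨ y = q) := by
    intro y; rw [← mem_neighborSet, hNv]; simp
  have hadj_p : ∀ y, H.Adj p y ↔ (y = u ∨ y = p₂) := by
    intro y; rw [← mem_neighborSet, hNp]; simp
  have hadj_q : ∀ y, H.Adj q y ↔ (y = v ∨ y = q₂) := by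
    intro y; rw [← mem_neighborSet, hNq]; simp
  have hAup : H.Adj u p := (hadj_u p).mpr (Or.inl rfl)
  have hAuq' : H.Adj u q' := (hadj_u q').mpr (Or.inr rfl)
  have hAvp' : H.Adj v p' := (hadj_v p').mpr (Or.inl rfl)
  have hAvq : H.Adj v q := (hadj_v q).mpr (Or.inr rfl)
  have hup : u ≠ p := hAup.ne
  have hvq : v ≠ q := hAvq.ne
  have hS : ∀ a b, H.Adj a b → a ∈ c.supp → b ∈ c.supp := by
    intro a b hab ha
    rw [ConnectedComponent.mem_supp_iff] at ha ⊢
    rw [← ha]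
    exact ConnectedComponent.eq.mpr hab.symm.reachable
  have hreachS : ∀ x y : V, x ∈ c.supp → y ∈ c.supp → H.Reachable x y := by
    intro x y hx hy
    rw [ConnectedComponent.mem_supp_iff] at hx hy
    exact ConnectedComponent.eq.mp (hx.trans hy.symm)
  have hpS : p ∈ c.supp := hS u p hAup hu
  have hqS : q ∈ c.supp := hS v q hAvq hv
  set H' : SimpleGraph V :=
    H.deleteEdges {s(u,p), s(v,q)} ⊔ fromEdgeSet {s(u,v)} with hH'
  have hAdj' : ∀ x y, H'.Adj x y ↔
      ((H.Adj x y ∧ ¬(s(x,y) = s(u,p) ∨ s(x,y) = s(v,q))) ∨ (s(x,y) = s(u,v) ∧ x ≠ y)) := by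
    intro x y
    rw [hH']
    simp only [sup_adj, deleteEdges_adj, fromEdgeSet_adj, Set.mem_insert_iff,
      Set.mem_singleton_iff]
    try tauto
  have hN'u : H'.neighborSet u = {q', v} := by
    ext y
    rw [mem_neighborSet, hAdj']
    constructor
    · rintro (⟨hadj, hnot⟩ | ⟨heq, -⟩)
      · rcases (hadj_u y).mp hadj with rfl | rfl
        · exact absurd (Or.inl rfl) hnot
        · exact Set.mem_insert _ _
      · rw [Sym2.eq_iff] at heq
        rcases heq with ⟨-, rfl⟩ | ⟨h1, -⟩
        · exact Set.mem_insert_of_mem _ rfl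
        · exact absurd h1 huv
    · intro hy
      simp only [Set.mem_insert_iff, Set.mem_singleton_iff] at hy
      rcases hy with rfl | rfl
      · refine Or.inl ⟨hAuq', ?_⟩
        rintro (heq | heq) <;> rw [Sym2.eq_iff] at heq
        · rcases heq with ⟨-, h1⟩ | ⟨h1, -⟩
          · exact hpq' h1.symm
          · exact hup h1
        · rcases heq with ⟨h1, -⟩ | ⟨h1, -⟩
          · exact huv h1
          · exact hqu h1.symm
      · exact Or.inr ⟨rfl, huv⟩
  have hN'v : H'.neighborSet v = {p', u} := by
    ext y
    rw [mem_neighborSet, hAdj']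
    constructor
    · rintro (⟨hadj, hnot⟩ | ⟨heq, -⟩)
      · rcases (hadj_v y).mp hadj with rfl | rfl
        · exact Set.mem_insert _ _
        · exact absurd (Or.inr rfl) hnot
      · rw [Sym2.eq_iff] at heq
        rcases heq with ⟨h1, -⟩ | ⟨-, rfl⟩
        · exact absurd h1.symm huv
        · exact Set.mem_insert_of_mem _ rfl
    · intro hy
      simp only [Set.mem_insert_iff, Set.mem_singleton_iff] at hy
      rcases hy with rfl | rfl
      · refine Or.inl ⟨hAvp', ?_⟩
        rintro (heq | heq) <;> rw [Sym2.eq_iff] at heq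
        · rcases heq with ⟨h1, -⟩ | ⟨h1, -⟩
          · exact huv h1.symm
          · exact hpv h1.symm
        · rcases heq with ⟨-, h1⟩ | ⟨h1, -⟩
          · exact hp'q h1
          · exact hvq h1
      · refine Or.inr ⟨?_, huv.symm⟩
        rw [Sym2.eq_iff]
        exact Or.inr ⟨rfl, rfl⟩
  have hN'p : H'.neighborSet p = {p₂} := by
    ext y
    rw [mem_neighborSet, hAdj']
    constructor
    · rintro (⟨hadj, hnot⟩ | ⟨heq, -⟩)
      · rcases (hadj_p y).mp hadj with rfl | rfl
        · refine absurd (Or.inl ?_) hnot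
          rw [Sym2.eq_iff]
          exact Or.inr ⟨rfl, rfl⟩
        · exact rfl
      · rw [Sym2.eq_iff] at heq
        rcases heq with ⟨h1, -⟩ | ⟨h1, -⟩
        · exact absurd h1.symm hup
        · exact absurd h1 hpv
    · intro hy
      simp only [Set.mem_singleton_iff] at hy
      subst hy
      refine Or.inl ⟨(hadj_p _).mpr (Or.inr rfl), ?_⟩
      rintro (heq | heq) <;> rw [Sym2.eq_iff] at heq
      · rcases heq with ⟨h1, -⟩ | ⟨-, h1⟩
        · exact hup h1.symm
        · exact hup₂ h1.symm
      · rcases heq with ⟨h1, -⟩ | ⟨h1, -⟩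
        · exact hpv h1
        · exact hpq h1
  have hN'q : H'.neighborSet q = {q₂} := by
    ext y
    rw [mem_neighborSet, hAdj']
    constructor
    · rintro (⟨hadj, hnot⟩ | ⟨heq, -⟩)
      · rcases (hadj_q y).mp hadj with rfl | rfl
        · refine absurd (Or.inr ?_) hnot
          rw [Sym2.eq_iff]
          exact Or.inr ⟨rfl, rfl⟩
        · exact rfl
      · rw [Sym2.eq_iff] at heq
        rcases heq with ⟨h1, -⟩ | ⟨h1, -⟩
        · exact absurd h1 hqu
        · exact absurd h1.symm hvq
    · intro hy
      simp only [Set.mem_singleton_iff] at hy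
      subst hy
      refine Or.inl ⟨(hadj_q _).mpr (Or.inr rfl), ?_⟩
      rintro (heq | heq) <;> rw [Sym2.eq_iff] at heq
      · rcases heq with ⟨h1, -⟩ | ⟨h1, -⟩
        · exact hqu h1
        · exact hpq h1.symm
      · rcases heq with ⟨h1, -⟩ | ⟨-, h1⟩
        · exact hvq h1.symm
        · exact hvq₂ h1.symm
  have hN'other : ∀ x, x ≠ u → x ≠ v → x ≠ p → x ≠ q →
      H'.neighborSet x = H.neighborSet x := by
    intro x hxu hxv hxp hxq
    ext y
    rw [mem_neighborSet, mem_neighborSet, hAdj']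
    constructor
    · rintro (⟨h, -⟩ | ⟨heq, -⟩)
      · exact h
      · rw [Sym2.eq_iff] at heq
        rcases heq with ⟨h1, -⟩ | ⟨h1, -⟩
        · exact absurd h1 hxu
        · exact absurd h1 hxv
    · intro h
      refine Or.inl ⟨h, ?_⟩
      rintro (heq | heq) <;> rw [Sym2.eq_iff] at heq
      · rcases heq with ⟨h1, -⟩ | ⟨h1, -⟩
        · exact hxu h1
        · exact hxp h1
      · rcases heq with ⟨h1, -⟩ | ⟨h1, -⟩
        · exact hxv h1
        · exact hxq h1
  have hleG : H' ≤ G := by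
    intro x y hxy
    rw [hAdj'] at hxy
    rcases hxy with ⟨h, -⟩ | ⟨heq, -⟩
    · exact hmin.1.1.1 h
    · rw [Sym2.eq_iff] at heq
      rcases heq with ⟨rfl, rfl⟩ | ⟨rfl, rfl⟩
      · exact hGuv
      · exact hGuv.symm
  have hadd : ∀ x y, H'.Adj x y → H.Adj x y ∨ (x ∈ c.supp ∧ y ∈ c.supp) := by
    intro x y hxy
    rw [hAdj'] at hxy
    rcases hxy with ⟨h, -⟩ | ⟨heq, -⟩
    · exact Or.inl h
    · rw [Sym2.eq_iff] at heq
      rcases heq with ⟨rfl, rfl⟩ | ⟨rfl, rfl⟩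
      · exact Or.inr ⟨hu, hv⟩
      · exact Or.inr ⟨hv, hu⟩
  have hdel : ∀ x y, H.Adj x y → H'.Adj x y ∨ (x ∈ c.supp ∧ y ∈ c.supp) := by
    intro x y hxy
    by_cases h1 : s(x,y) = s(u,p)
    · rw [Sym2.eq_iff] at h1
      rcases h1 with ⟨rfl, rfl⟩ | ⟨rfl, rfl⟩
      · exact Or.inr ⟨hu, hpS⟩
      · exact Or.inr ⟨hpS, hu⟩
    · by_cases h2 : s(x,y) = s(v,q)
      · rw [Sym2.eq_iff] at h2
        rcases h2 with ⟨rfl, rfl⟩ | ⟨rfl, rfl⟩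
        · exact Or.inr ⟨hv, hqS⟩
        · exact Or.inr ⟨hqS, hv⟩
      · refine Or.inl ((hAdj' x y).mpr (Or.inl ⟨hxy, ?_⟩))
        tauto
  have hle2 : H.deleteEdges {s(u,p), s(v,q)} ≤ H' := le_sup_left
  have hRv : H'.Reachable u v := ((hAdj' u v).mpr (Or.inr ⟨rfl, huv⟩)).reachable
  have hRp : H'.Reachable u p := hRv.trans (Reachable.mono hle2 hreach).symm
  have hRq' : H'.Reachable u q' := by
    refine Adj.reachable ((hAdj' u q').mpr (Or.inl ⟨hAuq', ?_⟩))
    rintro (heq | heq) <;> rw [Sym2.eq_iff] at heq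
    · rcases heq with ⟨-, h1⟩ | ⟨h1, -⟩
      · exact hpq' h1.symm
      · exact hup h1
    · rcases heq with ⟨h1, -⟩ | ⟨h1, -⟩
      · exact huv h1
      · exact hqu h1.symm
  have hKS : ∀ x, H'.Reachable u x → x ∈ c.supp := by
    intro x hx
    refine reach_closed' (fun a b hab ha => ?_) hu hx
    rcases hadd a b hab with h | ⟨-, hb⟩
    · exact hS a b h ha
    · exact hb
  have hRq : H'.Reachable u q := by
    by_contra hq
    have hhs := handshake_reach H' u
    have hset : {x : V | H'.Reachable u x ∧ Odd (Nat.card (H'.neighborSet x))}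
        = {p} := by
      ext x
      simp only [Set.mem_setOf_eq, Set.mem_singleton_iff]
      constructor
      · rintro ⟨hrx, hox⟩
        have hxS := hKS x hrx
        by_cases h1 : x = u
        · subst h1; rw [hN'u, pair_card hq'v] at hox
          exact absurd hox (by decide)
        · by_cases h2 : x = v
          · subst h2; rw [hN'v, pair_card hp'u] at hox
            exact absurd hox (by decide)
          · by_cases h3 : x = p
            · exact h3
            · by_cases h4 : x = q
              · exact absurd (h4 ▸ hrx) hq
              · rw [hN'other x h1 h2 h3 h4, hc.2 x hxS] at hox
                exact absurd hox (by decide)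
      · rintro rfl
        refine ⟨hRp, ?_⟩
        rw [hN'p, single_card]
        decide
    rw [hset, single_card] at hhs
    exact (by decide : ¬ Even 1) hhs
  have hallS : ∀ x ∈ c.supp, H'.Reachable u x := by
    intro x hx
    refine reach_closed' (S := {z | H'.Reachable u z}) (fun a b hab ha => ?_)
      (Reachable.refl u) (hreachS u x hu hx)
    simp only [Set.mem_setOf_eq] at ha ⊢
    by_cases h1 : s(a,b) = s(u,p)
    · rw [Sym2.eq_iff] at h1
      rcases h1 with ⟨ha1, hb1⟩ | ⟨ha1, hb1⟩
      · rw [hb1]; exact hRp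
      · rw [hb1]
    · by_cases h2 : s(a,b) = s(v,q)
      · rw [Sym2.eq_iff] at h2
        rcases h2 with ⟨ha1, hb1⟩ | ⟨ha1, hb1⟩
        · rw [hb1]; exact hRq
        · rw [hb1]; exact hRv
      · refine ha.trans (Adj.reachable ((hAdj' a b).mpr (Or.inl ⟨hab, ?_⟩)))
        tauto
  have hreachAll : ∀ x ∈ c.supp, ∀ y ∈ c.supp, H'.Reachable x y :=
    fun x hx y hy => (hallS x hx).symm.trans (hallS y hy)
  refine master hmin hc H' hleG hadd hdel hreachAll p q hpS hqS hpq ?_ ?_ ?_ hnadj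
  · rw [hN'p]; exact single_card _
  · rw [hN'q]; exact single_card _
  · intro x hx h1 h2
    by_cases h3 : x = u
    · subst h3; rw [hN'u]; exact pair_card hq'v
    · by_cases h4 : x = v
      · subst h4; rw [hN'v]; exact pair_card hp'u
      · rw [hN'other x h3 h4 h1 h2]; exact hc.2 x hx


lemma swapC [Fintype V] {G H : SimpleGraph V}
    (hmin : IsMinValidFactor G H) {c : H.ConnectedComponent} (hc : OddCycleComp H c)
    {u v p q q' p' p₂ r q₂ w : V}
    (hu : u ∈ c.supp) (hv : v ∈ c.supp)
    (hGuv : G.Adj u v) (hHuv : ¬ H.Adj u v) (hGpq : G.Adj p q)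
    (hNu : H.neighborSet u = {p, q'}) (hpq' : p ≠ q')
    (hNv : H.neighborSet v = {p', q}) (hp'q : p' ≠ q)
    (hNp : H.neighborSet p = {u, p₂}) (hup₂ : u ≠ p₂)
    (hNp' : H.neighborSet p' = {r, v}) (hrv : r ≠ v)
    (hNq : H.neighborSet q = {v, q₂}) (hvq₂ : v ≠ q₂)
    (hNq₂ : H.neighborSet q₂ = {q, w}) (hqw : q ≠ w)
    (hpv : p ≠ v) (hpp' : p ≠ p') (hpq₂ : p ≠ q₂) (hp'u : p' ≠ u) (hp'q₂ : p' ≠ q₂)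
    (hqu : q ≠ u) (hq₂u : q₂ ≠ u) (hq'v : q' ≠ v) (hp₂q : p₂ ≠ q)
    (hreach : (H.deleteEdges {s(u,p), s(v,p'), s(q,q₂)}).Reachable p p')
    (hnadj : ¬ G.Adj p' q₂) : False := by
  classical
  have huv : u ≠ v := hGuv.ne
  have hpq : p ≠ q := hGpq.ne
  have hadj_u : ∀ y, H.Adj u y ↔ (y = p ∨ y = q') := by
    intro y; rw [← mem_neighborSet, hNu]; simp
  have hadj_v : ∀ y, H.Adj v y ↔ (y = p' ∨ y = q) := by
    intro y; rw [← mem_neighborSet, hNv]; simp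
  have hadj_p : ∀ y, H.Adj p y ↔ (y = u ∨ y = p₂) := by
    intro y; rw [← mem_neighborSet, hNp]; simp
  have hadj_p' : ∀ y, H.Adj p' y ↔ (y = r ∨ y = v) := by
    intro y; rw [← mem_neighborSet, hNp']; simp
  have hadj_q : ∀ y, H.Adj q y ↔ (y = v ∨ y = q₂) := by
    intro y; rw [← mem_neighborSet, hNq]; simp
  have hadj_q₂ : ∀ y, H.Adj q₂ y ↔ (y = q ∨ y = w) := by
    intro y; rw [← mem_neighborSet, hNq₂]; simp
  have hAup : H.Adj u p := (hadj_u p).mpr (Or.inl rfl)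
  have hAuq' : H.Adj u q' := (hadj_u q').mpr (Or.inr rfl)
  have hAvp' : H.Adj v p' := (hadj_v p').mpr (Or.inl rfl)
  have hAvq : H.Adj v q := (hadj_v q).mpr (Or.inr rfl)
  have hAqq₂ : H.Adj q q₂ := (hadj_q q₂).mpr (Or.inr rfl)
  have hup : u ≠ p := hAup.ne
  have hvp' : v ≠ p' := hAvp'.ne
  have hvq : v ≠ q := hAvq.ne
  have hqq₂ : q ≠ q₂ := hAqq₂.ne
  have hS : ∀ a b, H.Adj a b → a ∈ c.supp → b ∈ c.supp := by
    intro a b hab ha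
    rw [ConnectedComponent.mem_supp_iff] at ha ⊢
    rw [← ha]
    exact ConnectedComponent.eq.mpr hab.symm.reachable
  have hreachS : ∀ x y : V, x ∈ c.supp → y ∈ c.supp → H.Reachable x y := by
    intro x y hx hy
    rw [ConnectedComponent.mem_supp_iff] at hx hy
    exact ConnectedComponent.eq.mp (hx.trans hy.symm)
  have hpS : p ∈ c.supp := hS u p hAup hu
  have hqS : q ∈ c.supp := hS v q hAvq hv
  have hp'S : p' ∈ c.supp := hS v p' hAvp' hv
  have hq₂S : q₂ ∈ c.supp := hS q q₂ hAqq₂ hqS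
  set H' : SimpleGraph V :=
    H.deleteEdges {s(u,p), s(v,p'), s(q,q₂)} ⊔ fromEdgeSet {s(u,v), s(p,q)} with hH'
  have hAdj' : ∀ x y, H'.Adj x y ↔
      ((H.Adj x y ∧ ¬(s(x,y) = s(u,p) ∨ s(x,y) = s(v,p') ∨ s(x,y) = s(q,q₂)))
        ∨ ((s(x,y) = s(u,v) ∨ s(x,y) = s(p,q)) ∧ x ≠ y)) := by
    intro x y
    rw [hH']
    simp only [sup_adj, deleteEdges_adj, fromEdgeSet_adj, Set.mem_insert_iff,
      Set.mem_singleton_iff]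
    try tauto
  have hN'u : H'.neighborSet u = {q', v} := by
    ext y
    rw [mem_neighborSet, hAdj']
    constructor
    · rintro (⟨hadj, hnot⟩ | ⟨heq, -⟩)
      · rcases (hadj_u y).mp hadj with rfl | rfl
        · exact absurd (Or.inl rfl) hnot
        · exact Set.mem_insert _ _
      · rcases heq with heq | heq <;> rw [Sym2.eq_iff] at heq
        · rcases heq with ⟨-, rfl⟩ | ⟨h1, -⟩
          · exact Set.mem_insert_of_mem _ rfl
          · exact absurd h1 huv
        · rcases heq with ⟨h1, -⟩ | ⟨h1, -⟩
          · exact absurd h1 hup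
          · exact absurd h1.symm hqu
    · intro hy
      simp only [Set.mem_insert_iff, Set.mem_singleton_iff] at hy
      rcases hy with rfl | rfl
      · refine Or.inl ⟨hAuq', ?_⟩
        rintro (heq | heq | heq) <;> rw [Sym2.eq_iff] at heq
        · rcases heq with ⟨-, h1⟩ | ⟨h1, -⟩
          · exact hpq' h1.symm
          · exact hup h1
        · rcases heq with ⟨h1, -⟩ | ⟨h1, -⟩
          · exact huv h1
          · exact hp'u h1.symm
        · rcases heq with ⟨h1, -⟩ | ⟨h1, -⟩
          · exact hqu h1.symm
          · exact hq₂u h1.symm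
      · exact Or.inr ⟨Or.inl rfl, huv⟩
  have hN'v : H'.neighborSet v = {q, u} := by
    ext y
    rw [mem_neighborSet, hAdj']
    constructor
    · rintro (⟨hadj, hnot⟩ | ⟨heq, -⟩)
      · rcases (hadj_v y).mp hadj with rfl | rfl
        · refine absurd (Or.inr (Or.inl ?_)) hnot
          rfl
        · exact Set.mem_insert _ _
      · rcases heq with heq | heq <;> rw [Sym2.eq_iff] at heq
        · rcases heq with ⟨h1, -⟩ | ⟨-, rfl⟩
          · exact absurd h1.symm huv
          · exact Set.mem_insert_of_mem _ rfl
        · rcases heq with ⟨h1, -⟩ | ⟨h1, -⟩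
          · exact absurd h1.symm hpv
          · exact absurd h1 hvq
    · intro hy
      simp only [Set.mem_insert_iff, Set.mem_singleton_iff] at hy
      rcases hy with rfl | rfl
      · refine Or.inl ⟨hAvq, ?_⟩
        rintro (heq | heq | heq) <;> rw [Sym2.eq_iff] at heq
        · rcases heq with ⟨h1, -⟩ | ⟨h1, -⟩
          · exact huv h1.symm
          · exact hpv h1.symm
        · rcases heq with ⟨-, h1⟩ | ⟨h1, -⟩
          · exact hp'q h1.symm
          · exact hvp' h1
        · rcases heq with ⟨h1, -⟩ | ⟨h1, -⟩
          · exact hvq h1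
          · exact hvq₂ h1
      · refine Or.inr ⟨Or.inl ?_, huv.symm⟩
        rw [Sym2.eq_iff]
        exact Or.inr ⟨rfl, rfl⟩
  have hN'p : H'.neighborSet p = {p₂, q} := by
    ext y
    rw [mem_neighborSet, hAdj']
    constructor
    · rintro (⟨hadj, hnot⟩ | ⟨heq, -⟩)
      · rcases (hadj_p y).mp hadj with rfl | rfl
        · refine absurd (Or.inl ?_) hnot
          rw [Sym2.eq_iff]
          exact Or.inr ⟨rfl, rfl⟩
        · exact Set.mem_insert _ _
      · rcases heq with heq | heq <;> rw [Sym2.eq_iff] at heq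
        · rcases heq with ⟨h1, -⟩ | ⟨h1, -⟩
          · exact absurd h1.symm hup
          · exact absurd h1 hpv
        · rcases heq with ⟨-, rfl⟩ | ⟨h1, -⟩
          · exact Set.mem_insert_of_mem _ rfl
          · exact absurd h1 hpq
    · intro hy
      simp only [Set.mem_insert_iff, Set.mem_singleton_iff] at hy
      rcases hy with rfl | rfl
      · refine Or.inl ⟨(hadj_p _).mpr (Or.inr rfl), ?_⟩
        rintro (heq | heq | heq) <;> rw [Sym2.eq_iff] at heq
        · rcases heq with ⟨h1, -⟩ | ⟨-, h1⟩
          · exact hup h1.symm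
          · exact hup₂ h1.symm
        · rcases heq with ⟨h1, -⟩ | ⟨h1, -⟩
          · exact hpv h1
          · exact hpp' h1
        · rcases heq with ⟨h1, -⟩ | ⟨h1, -⟩
          · exact hpq h1
          · exact hpq₂ h1
      · refine Or.inr ⟨Or.inr rfl, hpq⟩
  have hN'p' : H'.neighborSet p' = {r} := by
    ext y
    rw [mem_neighborSet, hAdj']
    constructor
    · rintro (⟨hadj, hnot⟩ | ⟨heq, -⟩)
      · rcases (hadj_p' y).mp hadj with rfl | rfl
        · exact rfl
        · refine absurd (Or.inr (Or.inl ?_)) hnot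
          rw [Sym2.eq_iff]
          exact Or.inr ⟨rfl, rfl⟩
      · rcases heq with heq | heq <;> rw [Sym2.eq_iff] at heq
        · rcases heq with ⟨h1, -⟩ | ⟨h1, -⟩
          · exact absurd h1 hp'u
          · exact absurd h1.symm hvp'
        · rcases heq with ⟨h1, -⟩ | ⟨h1, -⟩
          · exact absurd h1.symm hpp'
          · exact absurd h1 hp'q
    · intro hy
      simp only [Set.mem_singleton_iff] at hy
      subst hy
      refine Or.inl ⟨(hadj_p' _).mpr (Or.inl rfl), ?_⟩
      rintro (heq | heq | heq) <;> rw [Sym2.eq_iff] at heq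
      · rcases heq with ⟨h1, -⟩ | ⟨h1, -⟩
        · exact hp'u h1
        · exact hpp' h1.symm
      · rcases heq with ⟨h1, -⟩ | ⟨-, h1⟩
        · exact hvp' h1.symm
        · exact hrv h1
      · rcases heq with ⟨h1, -⟩ | ⟨h1, -⟩
        · exact hp'q h1
        · exact hp'q₂ h1
  have hN'q : H'.neighborSet q = {v, p} := by
    ext y
    rw [mem_neighborSet, hAdj']
    constructor
    · rintro (⟨hadj, hnot⟩ | ⟨heq, -⟩)
      · rcases (hadj_q y).mp hadj with rfl | rfl
        · exact Set.mem_insert _ _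
        · exact absurd (Or.inr (Or.inr rfl)) hnot
      · rcases heq with heq | heq <;> rw [Sym2.eq_iff] at heq
        · rcases heq with ⟨h1, -⟩ | ⟨h1, -⟩
          · exact absurd h1 hqu
          · exact absurd h1.symm hvq
        · rcases heq with ⟨h1, -⟩ | ⟨-, rfl⟩
          · exact absurd h1.symm hpq
          · exact Set.mem_insert_of_mem _ rfl
    · intro hy
      simp only [Set.mem_insert_iff, Set.mem_singleton_iff] at hy
      rcases hy with rfl | rfl
      · refine Or.inl ⟨(hadj_q _).mpr (Or.inl rfl), ?_⟩
        rintro (heq | heq | heq) <;> rw [Sym2.eq_iff] at heq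
        · rcases heq with ⟨h1, -⟩ | ⟨h1, -⟩
          · exact hqu h1
          · exact hpq h1.symm
        · rcases heq with ⟨h1, -⟩ | ⟨h1, -⟩
          · exact hvq h1.symm
          · exact hp'q h1.symm
        · rcases heq with ⟨-, h1⟩ | ⟨h1, -⟩
          · exact hvq₂ h1
          · exact hqq₂ h1
      · refine Or.inr ⟨Or.inr ?_, hpq.symm⟩
        rw [Sym2.eq_iff]
        exact Or.inr ⟨rfl, rfl⟩
  have hN'q₂ : H'.neighborSet q₂ = {w} := by
    ext y
    rw [mem_neighborSet, hAdj']
    constructor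
    · rintro (⟨hadj, hnot⟩ | ⟨heq, -⟩)
      · rcases (hadj_q₂ y).mp hadj with rfl | rfl
        · refine absurd (Or.inr (Or.inr ?_)) hnot
          rw [Sym2.eq_iff]
          exact Or.inr ⟨rfl, rfl⟩
        · exact rfl
      · rcases heq with heq | heq <;> rw [Sym2.eq_iff] at heq
        · rcases heq with ⟨h1, -⟩ | ⟨h1, -⟩
          · exact absurd h1 hq₂u
          · exact absurd h1.symm hvq₂
        · rcases heq with ⟨h1, -⟩ | ⟨h1, -⟩
          · exact absurd h1.symm hpq₂
          · exact absurd h1.symm hqq₂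
    · intro hy
      simp only [Set.mem_singleton_iff] at hy
      subst hy
      refine Or.inl ⟨(hadj_q₂ _).mpr (Or.inr rfl), ?_⟩
      rintro (heq | heq | heq) <;> rw [Sym2.eq_iff] at heq
      · rcases heq with ⟨h1, -⟩ | ⟨h1, -⟩
        · exact hq₂u h1
        · exact hpq₂ h1.symm
      · rcases heq with ⟨h1, -⟩ | ⟨h1, -⟩
        · exact hvq₂ h1.symm
        · exact hp'q₂ h1.symm
      · rcases heq with ⟨h1, -⟩ | ⟨-, h1⟩
        · exact hqq₂ h1.symm
        · exact hqw h1.symm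
  have hN'other : ∀ x, x ≠ u → x ≠ v → x ≠ p → x ≠ p' → x ≠ q → x ≠ q₂ →
      H'.neighborSet x = H.neighborSet x := by
    intro x hxu hxv hxp hxp' hxq hxq₂
    ext y
    rw [mem_neighborSet, mem_neighborSet, hAdj']
    constructor
    · rintro (⟨h, -⟩ | ⟨heq, -⟩)
      · exact h
      · rcases heq with heq | heq <;> rw [Sym2.eq_iff] at heq
        · rcases heq with ⟨h1, -⟩ | ⟨h1, -⟩
          · exact absurd h1 hxu
          · exact absurd h1 hxv
        · rcases heq with ⟨h1, -⟩ | ⟨h1, -⟩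
          · exact absurd h1 hxp
          · exact absurd h1 hxq
    · intro h
      refine Or.inl ⟨h, ?_⟩
      rintro (heq | heq | heq) <;> rw [Sym2.eq_iff] at heq
      · rcases heq with ⟨h1, -⟩ | ⟨h1, -⟩
        · exact hxu h1
        · exact hxp h1
      · rcases heq with ⟨h1, -⟩ | ⟨h1, -⟩
        · exact hxv h1
        · exact hxp' h1
      · rcases heq with ⟨h1, -⟩ | ⟨h1, -⟩
        · exact hxq h1
        · exact hxq₂ h1
  have hleG : H' ≤ G := by
    intro x y hxy
    rw [hAdj'] at hxy
    rcases hxy with ⟨h, -⟩ | ⟨heq, -⟩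
    · exact hmin.1.1.1 h
    · rcases heq with heq | heq <;> rw [Sym2.eq_iff] at heq <;>
        rcases heq with ⟨h1, h2⟩ | ⟨h1, h2⟩ <;> rw [h1, h2]
      · exact hGuv
      · exact hGuv.symm
      · exact hGpq
      · exact hGpq.symm
  have hadd : ∀ x y, H'.Adj x y → H.Adj x y ∨ (x ∈ c.supp ∧ y ∈ c.supp) := by
    intro x y hxy
    rw [hAdj'] at hxy
    rcases hxy with ⟨h, -⟩ | ⟨heq, -⟩
    · exact Or.inl h
    · rcases heq with heq | heq <;> rw [Sym2.eq_iff] at heq <;>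
        rcases heq with ⟨h1, h2⟩ | ⟨h1, h2⟩ <;> rw [h1, h2] <;> right
      · exact ⟨hu, hv⟩
      · exact ⟨hv, hu⟩
      · exact ⟨hpS, hqS⟩
      · exact ⟨hqS, hpS⟩
  have hdel : ∀ x y, H.Adj x y → H'.Adj x y ∨ (x ∈ c.supp ∧ y ∈ c.supp) := by
    intro x y hxy
    by_cases h1 : s(x,y) = s(u,p)
    · rw [Sym2.eq_iff] at h1
      rcases h1 with ⟨h1, h2⟩ | ⟨h1, h2⟩ <;> rw [h1, h2] <;> right
      · exact ⟨hu, hpS⟩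
      · exact ⟨hpS, hu⟩
    · by_cases h2 : s(x,y) = s(v,p')
      · rw [Sym2.eq_iff] at h2
        rcases h2 with ⟨h1, h2⟩ | ⟨h1, h2⟩ <;> rw [h1, h2] <;> right
        · exact ⟨hv, hp'S⟩
        · exact ⟨hp'S, hv⟩
      · by_cases h3 : s(x,y) = s(q,q₂)
        · rw [Sym2.eq_iff] at h3
          rcases h3 with ⟨h1, h2⟩ | ⟨h1, h2⟩ <;> rw [h1, h2] <;> right
          · exact ⟨hqS, hq₂S⟩
          · exact ⟨hq₂S, hqS⟩
        · refine Or.inl ((hAdj' x y).mpr (Or.inl ⟨hxy, ?_⟩))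
          tauto
  have hle2 : H.deleteEdges {s(u,p), s(v,p'), s(q,q₂)} ≤ H' := le_sup_left
  have hRv : H'.Reachable u v := ((hAdj' u v).mpr (Or.inr ⟨Or.inl rfl, huv⟩)).reachable
  have hRq : H'.Reachable u q := by
    refine hRv.trans (Adj.reachable ((hAdj' v q).mpr (Or.inl ⟨hAvq, ?_⟩)))
    rintro (heq | heq | heq) <;> rw [Sym2.eq_iff] at heq
    · rcases heq with ⟨h1, -⟩ | ⟨h1, -⟩
      · exact huv h1.symm
      · exact hpv h1.symm
    · rcases heq with ⟨-, h1⟩ | ⟨h1, -⟩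
      · exact hp'q h1.symm
      · exact hvp' h1
    · rcases heq with ⟨h1, -⟩ | ⟨h1, -⟩
      · exact hvq h1
      · exact hvq₂ h1
  have hRp : H'.Reachable u p := by
    refine hRq.trans (Adj.reachable ((hAdj' q p).mpr (Or.inr ⟨Or.inr ?_, hpq.symm⟩)))
    rw [Sym2.eq_iff]
    exact Or.inr ⟨rfl, rfl⟩
  have hRp' : H'.Reachable u p' := hRp.trans (Reachable.mono hle2 hreach)
  have hKS : ∀ x, H'.Reachable u x → x ∈ c.supp := by
    intro x hx
    refine reach_closed' (fun a b hab ha => ?_) hu hx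
    rcases hadd a b hab with h | ⟨-, hb⟩
    · exact hS a b h ha
    · exact hb
  have hRq₂ : H'.Reachable u q₂ := by
    by_contra hq₂r
    have hhs := handshake_reach H' u
    have hset : {x : V | H'.Reachable u x ∧ Odd (Nat.card (H'.neighborSet x))}
        = {p'} := by
      ext x
      simp only [Set.mem_setOf_eq, Set.mem_singleton_iff]
      constructor
      · rintro ⟨hrx, hox⟩
        have hxS := hKS x hrx
        by_cases h1 : x = u
        · subst h1; rw [hN'u, pair_card hq'v] at hox
          exact absurd hox (by decide)
        · by_cases h2 : x = v
          · subst h2; rw [hN'v, pair_card hqu] at hox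
            exact absurd hox (by decide)
          · by_cases h3 : x = p
            · subst h3; rw [hN'p, pair_card hp₂q] at hox
              exact absurd hox (by decide)
            · by_cases h4 : x = p'
              · exact h4
              · by_cases h5 : x = q
                · subst h5; rw [hN'q, pair_card hpv.symm] at hox
                  exact absurd hox (by decide)
                · by_cases h6 : x = q₂
                  · exact absurd (h6 ▸ hrx) hq₂r
                  · rw [hN'other x h1 h2 h3 h4 h5 h6, hc.2 x hxS] at hox
                    exact absurd hox (by decide)
      · rintro rfl
        refine ⟨hRp', ?_⟩
        rw [hN'p', single_card]
        decide
    rw [hset, single_card] at hhs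
    exact (by decide : ¬ Even 1) hhs
  have hallS : ∀ x ∈ c.supp, H'.Reachable u x := by
    intro x hx
    refine reach_closed' (S := {z | H'.Reachable u z}) (fun a b hab ha => ?_)
      (Reachable.refl u) (hreachS u x hu hx)
    simp only [Set.mem_setOf_eq] at ha ⊢
    by_cases h1 : s(a,b) = s(u,p)
    · rw [Sym2.eq_iff] at h1
      rcases h1 with ⟨-, hb1⟩ | ⟨-, hb1⟩
      · rw [hb1]; exact hRp
      · rw [hb1]
    · by_cases h2 : s(a,b) = s(v,p')
      · rw [Sym2.eq_iff] at h2
        rcases h2 with ⟨-, hb1⟩ | ⟨-, hb1⟩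
        · rw [hb1]; exact hRp'
        · rw [hb1]; exact hRv
      · by_cases h3 : s(a,b) = s(q,q₂)
        · rw [Sym2.eq_iff] at h3
          rcases h3 with ⟨-, hb1⟩ | ⟨-, hb1⟩
          · rw [hb1]; exact hRq₂
          · rw [hb1]; exact hRq
        · refine ha.trans (Adj.reachable ((hAdj' a b).mpr (Or.inl ⟨hab, ?_⟩)))
          tauto
  have hreachAll : ∀ x ∈ c.supp, ∀ y ∈ c.supp, H'.Reachable x y :=
    fun x hx y hy => (hallS x hx).symm.trans (hallS y hy)
  refine master hmin hc H' hleG hadd hdel hreachAll p' q₂ hp'S hq₂S hp'q₂ ?_ ?_ ?_ hnadj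
  · rw [hN'p']; exact single_card _
  · rw [hN'q₂]; exact single_card _
  · intro x hx h1 h2
    by_cases h3 : x = u
    · subst h3; rw [hN'u]; exact pair_card hq'v
    · by_cases h4 : x = v
      · subst h4; rw [hN'v]; exact pair_card hqu
      · by_cases h5 : x = p
        · subst h5; rw [hN'p]; exact pair_card hp₂q
        · by_cases h6 : x = q
          · subst h6; rw [hN'q]; exact pair_card hpv.symm
          · rw [hN'other x h3 h4 h5 h1 h6 h2]; exact hc.2 x hx


end


set_option maxHeartbeats 2000000 in
/-- In a minimal valid factor, every odd cycle is chordless (induced) in G. -/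
theorem stmt10 {V : Type*} [Fintype V] (G H : SimpleGraph V) (hG : IsCubic G)
    (hmin : IsMinValidFactor G H) (c : H.ConnectedComponent)
    (hc : OddCycleComp H c) (u v : V) (hu : u ∈ c.supp) (hv : v ∈ c.supp)
    (hadj : G.Adj u v) : H.Adj u v := by
  classical
  by_contra hHuv
  have hHle : H ≤ G := hmin.1.1.1
  have hdeg2 := hc.2
  have huvne : u ≠ v := hadj.ne
  have hS : ∀ a b, H.Adj a b → a ∈ c.supp → b ∈ c.supp := by
    intro a b hab ha
    rw [ConnectedComponent.mem_supp_iff] at ha ⊢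
    rw [← ha]
    exact ConnectedComponent.eq.mpr hab.symm.reachable
  have hreachS : ∀ x y : V, x ∈ c.supp → y ∈ c.supp → H.Reachable x y := by
    intro x y hx hy
    rw [ConnectedComponent.mem_supp_iff] at hx hy
    exact ConnectedComponent.eq.mp (hx.trans hy.symm)
  obtain ⟨w0⟩ := hreachS u v hu hv
  obtain ⟨W, hW⟩ : ∃ w : H.Walk u v, w.IsPath := ⟨w0.toPath.1, w0.toPath.2⟩
  set n := W.length with hn
  have hinj : ∀ i j, i ≤ n → j ≤ n → W.getVert i = W.getVert j → i = j :=
    getVert_inj hW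
  have hgv0 : W.getVert 0 = u := W.getVert_zero
  have hgvn : W.getVert n = v := W.getVert_length
  have hn2 : 2 ≤ n := by
    by_contra hlt
    push_neg at hlt
    have hcase : n = 0 ∨ n = 1 := by omega
    rcases hcase with h | h
    · exact huvne (by rw [← hgv0, (congrArg W.getVert h.symm : W.getVert 0 = W.getVert n), hgvn])
    · apply hHuv
      have h2 := W.adj_getVert_succ (i := 0) (by omega)
      rw [hgv0] at h2
      rw [show (0 + 1 : ℕ) = n by omega, hgvn] at h2
      exact h2
  have hWS : ∀ i, W.getVert i ∈ c.supp := by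
    intro i
    induction i with
    | zero => rw [hgv0]; exact hu
    | succ k ih =>
      rcases Nat.lt_or_ge k n with hk | hk
      · exact hS _ _ (W.adj_getVert_succ hk) ih
      · rw [W.getVert_of_length_le (by omega : W.length ≤ k + 1)]
        exact hv
  set p := W.getVert 1 with hpdef
  set p' := W.getVert (n-1) with hp'def
  have hAup : H.Adj u p := by
    have h2 := W.adj_getVert_succ (i := 0) (by omega)
    rwa [hgv0] at h2
  have hAp'v : H.Adj p' v := by
    have h2 := W.adj_getVert_succ (i := n-1) (by omega)
    rwa [show n - 1 + 1 = n by omega, hgvn] at h2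
  have hAvp' : H.Adj v p' := hAp'v.symm
  obtain ⟨q', hpq', hNu⟩ := two_nbrs (hdeg2 u hu) hAup
  obtain ⟨q, hp'q, hNv⟩ := two_nbrs (hdeg2 v hv) hAvp'
  have hAuq' : H.Adj u q' := by
    have h2 : q' ∈ H.neighborSet u := by
      rw [hNu]; exact Set.mem_insert_of_mem _ rfl
    exact h2
  have hAvq : H.Adj v q := by
    have h2 : q ∈ H.neighborSet v := by
      rw [hNv]; exact Set.mem_insert_of_mem _ rfl
    exact h2
  have hpS : p ∈ c.supp := hS u p hAup hu
  have hp'S : p' ∈ c.supp := hS v p' hAvp' hv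
  have hqS : q ∈ c.supp := hS v q hAvq hv
  have hq'S : q' ∈ c.supp := hS u q' hAuq' hu
  have hNint : ∀ i, 0 < i → i < n →
      H.neighborSet (W.getVert i) = {W.getVert (i-1), W.getVert (i+1)} ∧
      W.getVert (i-1) ≠ W.getVert (i+1) := by
    intro i h0 hi
    have ha1 : H.Adj (W.getVert i) (W.getVert (i-1)) := by
      have h2 := W.adj_getVert_succ (i := i-1) (by omega)
      rw [show i - 1 + 1 = i by omega] at h2
      exact h2.symm
    have ha2 : H.Adj (W.getVert i) (W.getVert (i+1)) := W.adj_getVert_succ hi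
    have hne : W.getVert (i-1) ≠ W.getVert (i+1) := by
      intro h2
      have := hinj (i-1) (i+1) (by omega) (by omega) h2
      omega
    obtain ⟨b, hb, hNb⟩ := two_nbrs (hdeg2 _ (hWS i)) ha1
    have h2 : W.getVert (i+1) ∈ H.neighborSet (W.getVert i) := ha2
    rw [hNb] at h2
    simp only [Set.mem_insert_iff, Set.mem_singleton_iff] at h2
    rcases h2 with h2 | h2
    · exact absurd h2.symm hne
    · rw [← h2] at hNb
      exact ⟨hNb, hne⟩
  have hq_not : ∀ i, i ≤ n → W.getVert i ≠ q := by
    intro i hi heq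
    rcases Nat.eq_zero_or_pos i with rfl | h0
    · rw [hgv0] at heq
      exact hHuv (heq ▸ hAvq).symm
    rcases Nat.lt_or_ge i n with hiltn | hin
    · obtain ⟨hNi, hnei⟩ := hNint i h0 hiltn
      have hv2 : v ∈ H.neighborSet (W.getVert i) := by
        rw [heq]; exact hAvq.symm
      rw [hNi] at hv2
      simp only [Set.mem_insert_iff, Set.mem_singleton_iff] at hv2
      rcases hv2 with h2 | h2
      · have := hinj (i-1) n (by omega) le_rfl (by rw [← h2, hgvn])
        omega
      · have hieq := hinj (i+1) n (by omega) le_rfl (by rw [← h2, hgvn])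
        apply hp'q
        rw [hp'def, show n - 1 = i by omega]
        exact heq
    · have hieq : i = n := by omega
      rw [hieq, hgvn] at heq
      exact hAvq.ne heq
  have hq'_not : ∀ i, i ≤ n → W.getVert i ≠ q' := by
    intro i hi heq
    rcases Nat.eq_zero_or_pos i with rfl | h0
    · rw [hgv0] at heq
      exact hAuq'.ne heq
    rcases Nat.lt_or_ge i n with hiltn | hin
    · obtain ⟨hNi, hnei⟩ := hNint i h0 hiltn
      have hu2 : u ∈ H.neighborSet (W.getVert i) := by
        rw [heq]; exact hAuq'.symm
      rw [hNi] at hu2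
      simp only [Set.mem_insert_iff, Set.mem_singleton_iff] at hu2
      rcases hu2 with h2 | h2
      · have hieq := hinj (i-1) 0 (by omega) (by omega) (by rw [← h2, hgv0])
        apply hpq'
        rw [hpdef, show (1:ℕ) = i by omega]
        exact heq
      · have := hinj (i+1) 0 (by omega) (by omega) (by rw [← h2, hgv0])
        omega
    · have hieq : i = n := by omega
      rw [hieq, hgvn] at heq
      exact hHuv (heq ▸ hAuq')
  have hqu : q ≠ u := fun h => hq_not 0 (by omega) (by rw [hgv0, h])
  have hqv : v ≠ q := hAvq.ne
  have hq'u : u ≠ q' := hAuq'.ne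
  have hq'v : q' ≠ v := fun h => hq'_not n le_rfl (by rw [hgvn, h])
  have hqp : p ≠ q := hq_not 1 (by omega)
  have hq'p' : p' ≠ q' := hq'_not (n-1) (by omega)
  have hqp' : p' ≠ q := hq_not (n-1) (by omega)
  have hup : u ≠ p := hAup.ne
  have hpv : p ≠ v := by
    intro h
    have := hinj 1 n (by omega) le_rfl (by rw [← hpdef, h, hgvn])
    omega
  have hp'u : p' ≠ u := by
    intro h
    have := hinj (n-1) 0 (by omega) (by omega) (by rw [← hp'def, h, hgv0])
    omega
  have hvp' : v ≠ p' := hAvp'.ne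
  rcases Nat.lt_or_ge n 3 with hn3 | hn3
  · -- n = 2
    have hneq : n = 2 := by omega
    have hp'p : p' = p := by rw [hp'def, hpdef, hneq]
    obtain ⟨hNp, -⟩ := hNint 1 (by omega) (by omega)
    rw [show (1 : ℕ) - 1 = 0 by omega, show (1 : ℕ) + 1 = 2 by omega, hgv0,
      show (2 : ℕ) = n by omega, hgvn] at hNp
    by_cases hqq' : q = q'
    · obtain ⟨q₂, hvq₂, hNq⟩ := two_nbrs (hdeg2 q hqS) hAvq.symm
      have hAqu : H.Adj q u := by rw [hqq']; exact hAuq'.symm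
      have hq₂u : q₂ = u := by
        have h2 : u ∈ H.neighborSet q := hAqu
        rw [hNq] at h2
        simp only [Set.mem_insert_iff, Set.mem_singleton_iff] at h2
        rcases h2 with h2 | h2
        · exact absurd h2 huvne
        · exact h2.symm
      have hZ : c.supp ⊆ {u, v, p, q} := by
        intro x hx
        refine reach_closed' (fun a b hab ha => ?_) (Set.mem_insert _ _)
          (hreachS u x hu hx)
        simp only [Set.mem_insert_iff, Set.mem_singleton_iff] at ha ⊢
        rcases ha with ha1 | ha1 | ha1 | ha1 <;> rw [ha1] at hab
        · have h2 : b ∈ H.neighborSet u := hab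
          rw [hNu] at h2
          simp only [Set.mem_insert_iff, Set.mem_singleton_iff] at h2
          rcases h2 with rfl | rfl
          · tauto
          · rw [← hqq']; tauto
        · have h2 : b ∈ H.neighborSet v := hab
          rw [hNv, hp'p] at h2
          simp only [Set.mem_insert_iff, Set.mem_singleton_iff] at h2
          tauto
        · have h2 : b ∈ H.neighborSet p := hab
          rw [hNp] at h2
          simp only [Set.mem_insert_iff, Set.mem_singleton_iff] at h2
          tauto
        · have h2 : b ∈ H.neighborSet q := hab
          rw [hNq, hq₂u] at h2
          simp only [Set.mem_insert_iff, Set.mem_singleton_iff] at h2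
          tauto
      have hZ2 : ({u, v, p, q} : Set V) ⊆ c.supp := by
        intro x hx
        simp only [Set.mem_insert_iff, Set.mem_singleton_iff] at hx
        rcases hx with rfl | rfl | rfl | rfl
        exacts [hu, hv, hpS, hqS]
      have heqS : c.supp = {u, v, p, q} := Set.Subset.antisymm hZ hZ2
      have hodd := hc.1
      rw [heqS, card_four huvne hup hqu.symm hpv.symm hqv hqp] at hodd
      exact (by decide : ¬ Odd 4) hodd
    · obtain ⟨q₂, hvq₂, hNq⟩ := two_nbrs (hdeg2 q hqS) hAvq.symm
      obtain ⟨q'₂, huq'₂, hNq'⟩ := two_nbrs (hdeg2 q' hq'S) hAuq'.symm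
      have hNv2 : H.neighborSet v = {p, q} := by rw [hNv, hp'p]
      have hNp2 : H.neighborSet p = {v, u} := by rw [hNp, Set.pair_comm]
      have hApv : H.Adj p v := by
        have h2 : v ∈ H.neighborSet p := by
          rw [hNp]; exact Set.mem_insert_of_mem _ rfl
        exact h2
      by_cases hGpq : G.Adj p q
      · by_cases hGpq' : G.Adj p q'
        · exact cubic_four hG (hHle hAup.symm) (hHle hApv) hGpq hGpq'
            huvne hqu.symm hq'u hqv hq'v.symm hqq'
        · refine swapA hmin hc hv hu hadj.symm (fun h => hHuv h.symm)
            hNv2 hqp hNu hpq' hNp2 huvne.symm hNq' huq'₂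
            hpq' hup.symm hq'v hpv hqu ?_ hGpq'
          refine Adj.reachable ?_
          rw [deleteEdges_adj]
          refine ⟨hAup.symm, ?_⟩
          intro hmem
          simp only [Set.mem_insert_iff, Set.mem_singleton_iff] at hmem
          rcases hmem with hmem | hmem <;> rw [Sym2.eq_iff] at hmem
          · rcases hmem with ⟨h1, -⟩ | ⟨-, h2⟩
            · exact hpv h1
            · exact huvne h2
          · rcases hmem with ⟨h1, -⟩ | ⟨h1, -⟩
            · exact hup h1.symm
            · exact hpq' h1
      · refine swapA hmin hc hu hv hadj hHuv hNu hpq' hNv2 hqp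
          hNp huvne hNq hvq₂ hqp hpv hqu hup.symm hq'v ?_ hGpq
        refine Adj.reachable ?_
        rw [deleteEdges_adj]
        refine ⟨hApv, ?_⟩
        intro hmem
        simp only [Set.mem_insert_iff, Set.mem_singleton_iff] at hmem
        rcases hmem with hmem | hmem <;> rw [Sym2.eq_iff] at hmem
        · rcases hmem with ⟨h1, -⟩ | ⟨-, h2⟩
          · exact hup h1.symm
          · exact huvne h2.symm
        · rcases hmem with ⟨h1, -⟩ | ⟨h1, -⟩
          · exact hpv h1
          · exact hqp h1
  · -- n ≥ 3
    have hpp' : p ≠ p' := by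
      intro h
      have := hinj 1 (n-1) (by omega) (by omega) h
      omega
    obtain ⟨hNp0, hne0⟩ := hNint 1 (by omega) (by omega)
    rw [show (1:ℕ) - 1 = 0 by omega, show (1:ℕ) + 1 = 2 by omega, hgv0]
      at hNp0 hne0
    obtain ⟨hNp'0, hne1⟩ := hNint (n-1) (by omega) (by omega)
    rw [show n - 1 - 1 = n - 2 by omega, show n - 1 + 1 = n by omega, hgvn]
      at hNp'0 hne1
    obtain ⟨q₂, hvq₂, hNq⟩ := two_nbrs (hdeg2 q hqS) hAvq.symm
    obtain ⟨q'₂, huq'₂, hNq'⟩ := two_nbrs (hdeg2 q' hq'S) hAuq'.symm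
    have hAqq₂ : H.Adj q q₂ := by
      have h2 : q₂ ∈ H.neighborSet q := by
        rw [hNq]; exact Set.mem_insert_of_mem _ rfl
      exact h2
    have hAp'r : H.Adj p' (W.getVert (n-2)) := by
      have h2 : W.getVert (n-2) ∈ H.neighborSet p' := by
        rw [hNp'0]; exact Set.mem_insert _ _
      exact h2
    by_cases hGpq : G.Adj p q
    · by_cases hGp'q' : G.Adj p' q'
      · by_cases hqq' : q = q'
        · refine cubic_four hG (x := q) (a := u) (b := v) (s := p) (t := p')
            ?_ (hHle hAvq.symm) hGpq.symm ?_ huvne hup hp'u.symm hpv.symm hvp' hpp'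
          · have h2 := hHle hAuq'.symm
            rw [← hqq'] at h2
            exact h2
          · have h2 := hGp'q'.symm
            rw [← hqq'] at h2
            exact h2
        · by_cases hq₂q' : q₂ = q'
          · have hAqq' : H.Adj q q' := by rw [← hq₂q']; exact hAqq₂
            have hq'₂q : q'₂ = q := by
              have h2 : q ∈ H.neighborSet q' := hAqq'.symm
              rw [hNq'] at h2
              simp only [Set.mem_insert_iff, Set.mem_singleton_iff] at h2
              rcases h2 with h2 | h2
              · exact absurd h2 hqu
              · exact h2.symm
            rcases Nat.lt_or_ge n 4 with hn4 | hn4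
            · -- n = 3 : closed set of size six
              have hneq : n = 3 := by omega
              have hp₂p' : W.getVert 2 = p' := by
                rw [hp'def, hneq]
              have hrp : W.getVert (n-2) = p := by
                rw [hpdef, hneq]
              have hZ : c.supp ⊆ {u, v, p, p', q, q'} := by
                intro x hx
                refine reach_closed' (fun a b hab ha => ?_) (Set.mem_insert _ _)
                  (hreachS u x hu hx)
                simp only [Set.mem_insert_iff, Set.mem_singleton_iff] at ha ⊢
                rcases ha with ha1 | ha1 | ha1 | ha1 | ha1 | ha1 <;>
                  rw [ha1] at hab
                · have h2 : b ∈ H.neighborSet u := hab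
                  rw [hNu] at h2
                  simp only [Set.mem_insert_iff, Set.mem_singleton_iff] at h2
                  tauto
                · have h2 : b ∈ H.neighborSet v := hab
                  rw [hNv] at h2
                  simp only [Set.mem_insert_iff, Set.mem_singleton_iff] at h2
                  tauto
                · have h2 : b ∈ H.neighborSet p := hab
                  rw [hNp0, hp₂p'] at h2
                  simp only [Set.mem_insert_iff, Set.mem_singleton_iff] at h2
                  tauto
                · have h2 : b ∈ H.neighborSet p' := hab
                  rw [hNp'0, hrp] at h2
                  simp only [Set.mem_insert_iff, Set.mem_singleton_iff] at h2
                  tauto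
                · have h2 : b ∈ H.neighborSet q := hab
                  rw [hNq, hq₂q'] at h2
                  simp only [Set.mem_insert_iff, Set.mem_singleton_iff] at h2
                  tauto
                · have h2 : b ∈ H.neighborSet q' := hab
                  rw [hNq', hq'₂q] at h2
                  simp only [Set.mem_insert_iff, Set.mem_singleton_iff] at h2
                  tauto
              have hZ2 : ({u, v, p, p', q, q'} : Set V) ⊆ c.supp := by
                intro x hx
                simp only [Set.mem_insert_iff, Set.mem_singleton_iff] at hx
                rcases hx with rfl | rfl | rfl | rfl | rfl | rfl
                exacts [hu, hv, hpS, hp'S, hqS, hq'S]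
              have heqS : c.supp = {u, v, p, p', q, q'} :=
                Set.Subset.antisymm hZ hZ2
              have hodd := hc.1
              rw [heqS, card_six huvne hup hp'u.symm hqu.symm hq'u hpv.symm hvp'
                hqv hq'v.symm hpp' hqp hpq' hqp' hq'p' hqq'] at hodd
              exact (by decide : ¬ Odd 6) hodd
            · -- n ≥ 4 : swapC (σ version)
              have hrne : W.getVert (n-2) ≠ u := by
                intro h
                have := hinj (n-2) 0 (by omega) (by omega) (by rw [h, hgv0])
                omega
              obtain ⟨hNr, hr₂ne⟩ := hNint (n-2) (by omega) (by omega)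
              rw [show n-2-1 = n-3 by omega, show n-2+1 = n-1 by omega, ← hp'def]
                at hNr hr₂ne
              have hp'r3 : p' ≠ W.getVert (n-3) := by
                intro h
                have := hinj (n-1) (n-3) (by omega) (by omega) (by rw [← hp'def, h])
                omega
              have hpr : p ≠ W.getVert (n-2) := by
                intro h
                have := hinj 1 (n-2) (by omega) (by omega) (by rw [← hpdef, h])
                omega
              refine swapC hmin hc hu hv hadj hHuv hGp'q'.symm
                (by rw [hNu, Set.pair_comm]) hpq'.symm
                (by rw [hNv, Set.pair_comm]) hqp'.symm
                (by rw [hNq', hq'₂q]) hqu.symm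
                (by rw [hNq, hq₂q', Set.pair_comm]) hq'v
                (by rw [hNp'0, Set.pair_comm]) hne1.symm
                (by rw [hNr, Set.pair_comm]) hp'r3
                hq'v (fun h => hqq' h.symm)
                (Ne.symm (hq'_not (n-2) (by omega))) hqu
                (Ne.symm (hq_not (n-2) (by omega))) hp'u hrne hpv hqp'.symm
                ?_ ?_
              · refine Adj.reachable ?_
                rw [deleteEdges_adj]
                refine ⟨hAqq'.symm, ?_⟩
                intro hmem
                simp only [Set.mem_insert_iff, Set.mem_singleton_iff] at hmem
                rcases hmem with hmem | hmem | hmem <;> rw [Sym2.eq_iff] at hmem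
                · rcases hmem with ⟨h1, -⟩ | ⟨-, h2⟩
                  · exact hq'u h1.symm
                  · exact hqu h2
                · rcases hmem with ⟨h1, -⟩ | ⟨h1, -⟩
                  · exact hq'v h1
                  · exact hqq' h1.symm
                · rcases hmem with ⟨h1, -⟩ | ⟨h1, -⟩
                  · exact hq'p' h1.symm
                  · exact (hq'_not (n-2) (by omega)) h1.symm
              · intro h
                exact cubic_four hG (x := q) (hHle hAvq.symm) (hHle hAqq')
                  hGpq.symm h hq'v.symm hpv.symm hne1.symm hpq'.symm
                  (Ne.symm (hq'_not (n-2) (by omega))) hpr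
          · -- q₂ ≠ q' : swapC (direct version)
            have hq₂S : q₂ ∈ c.supp := hS q q₂ hAqq₂ hqS
            obtain ⟨w₂, hqw₂, hNq₂⟩ := two_nbrs (hdeg2 q₂ hq₂S) hAqq₂.symm
            have hq₂p : p ≠ q₂ := by
              intro h
              have h2 : q ∈ H.neighborSet p := by rw [h]; exact hAqq₂.symm
              rw [hNp0] at h2
              simp only [Set.mem_insert_iff, Set.mem_singleton_iff] at h2
              rcases h2 with h2 | h2
              · exact hqu h2
              · exact hq_not 2 (by omega) h2.symm
            have hq₂p' : p' ≠ q₂ := by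
              intro h
              have h2 : q ∈ H.neighborSet p' := by rw [h]; exact hAqq₂.symm
              rw [hNp'0] at h2
              simp only [Set.mem_insert_iff, Set.mem_singleton_iff] at h2
              rcases h2 with h2 | h2
              · exact hq_not (n-2) (by omega) h2.symm
              · exact hqv h2.symm
            have hq₂u : q₂ ≠ u := by
              intro h
              have h2 : q ∈ H.neighborSet u := by rw [← h]; exact hAqq₂.symm
              rw [hNu] at h2
              simp only [Set.mem_insert_iff, Set.mem_singleton_iff] at h2
              rcases h2 with h2 | h2
              · exact hqp h2.symm
              · exact hqq' h2
            refine swapC hmin hc hu hv hadj hHuv hGpq hNu hpq' hNv hp'q hNp0 hne0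
              hNp'0 hne1 hNq hvq₂ hNq₂ hqw₂ hpv hpp' hq₂p hp'u hq₂p' hqu hq₂u hq'v
              (hq_not 2 (by omega)) ?_ ?_
            · have hr := reach_seg W {s(u,p), s(v,p'), s(q,q₂)} 1 (n-1)
                (by omega) (by omega) ?_
              · exact hr
              · intro k hk1 hk2 hmem
                simp only [Set.mem_insert_iff, Set.mem_singleton_iff] at hmem
                rcases hmem with hmem | hmem | hmem <;> rw [Sym2.eq_iff] at hmem
                · rcases hmem with ⟨h1, -⟩ | ⟨-, h2⟩
                  · have := hinj k 0 (by omega) (by omega) (by rw [h1, hgv0])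
                    omega
                  · have := hinj (k+1) 0 (by omega) (by omega) (by rw [h2, hgv0])
                    omega
                · rcases hmem with ⟨h1, -⟩ | ⟨-, h2⟩
                  · have := hinj k n (by omega) le_rfl (by rw [h1, hgvn])
                    omega
                  · have := hinj (k+1) n (by omega) le_rfl (by rw [h2, hgvn])
                    omega
                · rcases hmem with ⟨h1, -⟩ | ⟨-, h2⟩
                  · exact hq_not k (by omega) h1
                  · exact hq_not (k+1) (by omega) h2
            · intro h
              have hrq₂ : W.getVert (n-2) ≠ q₂ := by
                intro h2
                have h3 : q ∈ H.neighborSet (W.getVert (n-2)) := by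
                  rw [h2]; exact hAqq₂.symm
                obtain ⟨hNr, -⟩ := hNint (n-2) (by omega) (by omega)
                rw [hNr] at h3
                simp only [Set.mem_insert_iff, Set.mem_singleton_iff] at h3
                rcases h3 with h3 | h3
                · exact hq_not (n-2-1) (by omega) h3.symm
                · exact hq_not (n-2+1) (by omega) h3.symm
              exact cubic_four hG (x := p') (hHle hAp'r) (hHle hAp'v) hGp'q' h
                hne1 (hq'_not (n-2) (by omega)) hrq₂
                hq'v.symm hvq₂ (fun h2 => hq₂q' h2.symm)
      · -- swapA (reversed)
        refine swapA hmin hc hv hu hadj.symm (fun h => hHuv h.symm)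
          hNv hp'q hNu hpq' (by rw [hNp'0, Set.pair_comm]) hne1.symm
          hNq' huq'₂ hq'p' hp'u hq'v hpv hqu ?_ hGp'q'
        have hr := reach_seg W {s(v,p'), s(u,q')} 0 (n-1) (by omega) (by omega) ?_
        · rw [hgv0] at hr
          exact hr.symm
        · intro k hk1 hk2 hmem
          simp only [Set.mem_insert_iff, Set.mem_singleton_iff] at hmem
          rcases hmem with hmem | hmem <;> rw [Sym2.eq_iff] at hmem
          · rcases hmem with ⟨h1, -⟩ | ⟨-, h2⟩
            · have := hinj k n (by omega) le_rfl (by rw [h1, hgvn])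
              omega
            · have := hinj (k+1) n (by omega) le_rfl (by rw [h2, hgvn])
              omega
          · rcases hmem with ⟨-, h2⟩ | ⟨h1, -⟩
            · exact hq'_not (k+1) (by omega) h2
            · exact hq'_not k (by omega) h1
    · -- swapA (direct)
      refine swapA hmin hc hu hv hadj hHuv hNu hpq' hNv hp'q hNp0 hne0 hNq hvq₂
        hqp hpv hqu hp'u hq'v ?_ hGpq
      have hr := reach_seg W {s(u,p), s(v,q)} 1 n (by omega) le_rfl ?_
      · rw [hgvn] at hr
        exact hr
      · intro k hk1 hk2 hmem
        simp only [Set.mem_insert_iff, Set.mem_singleton_iff] at hmem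
        rcases hmem with hmem | hmem <;> rw [Sym2.eq_iff] at hmem
        · rcases hmem with ⟨h1, -⟩ | ⟨-, h2⟩
          · have := hinj k 0 (by omega) (by omega) (by rw [h1, hgv0])
            omega
          · have := hinj (k+1) 0 (by omega) (by omega) (by rw [h2, hgv0])
            omega
        · rcases hmem with ⟨-, h2⟩ | ⟨h1, -⟩
          · exact hq_not (k+1) (by omega) h2
          · exact hq_not k (by omega) h1
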